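/- arXiv:1801.04178 — 5 statements merged into one kernel-verified Lean document; each statement's English description precedes it below -/
import Mathlib

section
/- Fix an integer n ≥ 1. The action of the fake Casimir element Ω on V ⊗ V is equal to σ + β*∘β, where β*∘β is the operator sending u ⊗ w to β(u ⊗ w)·β*(1); that is, for all standard basis vectors u, w of V, Ω·(u ⊗ w) = (−1)^{ū·w̄} w ⊗ u + β(u ⊗ w)·Σ_{i=1}^n (v_i ⊗ v_{i'} − v_{i'} ⊗ v_i). -/
open scoped TensorProduct

/-- Row/column index set `{1,…,n} ∪ {1',…,n'}` for `2n × 2n` matrices: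
`.inl i` is the unprimed index `i`, `.inr i` the primed index `i'`. -/
abbrev PIdx (n : ℕ) := Fin n ⊕ Fin n

/-- The space `M_{2n}(ℂ)` of `2n × 2n` complex matrices. -/
abbrev PMat (n : ℕ) := Matrix (PIdx n) (PIdx n) ℂ

/-- Matrix units `E_{rs}`. -/
noncomputable def Eu (n : ℕ) (r s : PIdx n) : PMat n := Matrix.single r s 1

/-- `A⁻_{ij} = E_{ij} − E_{j'i'}`. -/
noncomputable def Am (n : ℕ) (i j : Fin n) : PMat n :=
  Eu n (.inl i) (.inl j) - Eu n (.inr j) (.inr i)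

/-- `A⁺_{ij} = E_{ij} + E_{j'i'}`. -/
noncomputable def Ap (n : ℕ) (i j : Fin n) : PMat n :=
  Eu n (.inl i) (.inl j) + Eu n (.inr j) (.inr i)

/-- `B⁺_{ij} = E_{ij'} + E_{ji'}`. -/
noncomputable def Bp (n : ℕ) (i j : Fin n) : PMat n :=
  Eu n (.inl i) (.inr j) + Eu n (.inl j) (.inr i)

/-- `B⁻_{ij} = E_{ij'} − E_{ji'}`. -/
noncomputable def Bm (n : ℕ) (i j : Fin n) : PMat n :=
  Eu n (.inl i) (.inr j) - Eu n (.inl j) (.inr i)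

/-- `C⁺_{ij} = E_{i'j} + E_{j'i}`. -/
noncomputable def Cp (n : ℕ) (i j : Fin n) : PMat n :=
  Eu n (.inr i) (.inl j) + Eu n (.inr j) (.inl i)

/-- `C⁻_{ij} = E_{i'j} − E_{j'i}`. -/
noncomputable def Cm (n : ℕ) (i j : Fin n) : PMat n :=
  Eu n (.inr i) (.inl j) - Eu n (.inr j) (.inl i)

/-- The periplectic Lie superalgebra `p(n) ⊆ M_{2n}(ℂ)`, i.e. all block matrices
`(A B; C −Aᵀ)` with `Bᵀ = B` and `Cᵀ = −C`, as a `ℂ`-subspace of `M_{2n}(ℂ)`. -/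
noncomputable def pAlg (n : ℕ) : Submodule ℂ (PMat n) where
  carrier := {x | (∀ i j, x (.inr i) (.inr j) = -x (.inl j) (.inl i)) ∧
                  (∀ i j, x (.inl i) (.inr j) = x (.inl j) (.inr i)) ∧
                  (∀ i j, x (.inr i) (.inl j) = -x (.inr j) (.inl i))}
  add_mem' := by
    rintro x y ⟨hx1, hx2, hx3⟩ ⟨hy1, hy2, hy3⟩
    refine ⟨fun i j => ?_, fun i j => ?_, fun i j => ?_⟩ <;>
      simp only [Matrix.add_apply, hx1 i j, hx2 i j, hx3 i j, hy1 i j, hy2 i j, hy3 i j] <;>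
      ring
  zero_mem' := by
    refine ⟨fun i j => ?_, fun i j => ?_, fun i j => ?_⟩ <;> simp
  smul_mem' := by
    rintro c x ⟨hx1, hx2, hx3⟩
    refine ⟨fun i j => ?_, fun i j => ?_, fun i j => ?_⟩ <;>
      simp only [Matrix.smul_apply, hx1 i j, hx2 i j, hx3 i j, smul_eq_mul] <;> ring

/-- Index set for the basis `𝒳` of `p(n)`: pairs `(i,j)` for the `A⁻_{ij}`,
pairs `i ≤ j` for the `B⁺_{ij}`, and pairs `i < j` for the `C⁻_{ij}`. -/
abbrev PBIdx (n : ℕ) :=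
  (Fin n × Fin n) ⊕ ({p : Fin n × Fin n // p.1 ≤ p.2} ⊕ {p : Fin n × Fin n // p.1 < p.2})

/-- The family `𝒳 = {A⁻_{ij}} ∪ {B⁺_{ij} : i ≤ j} ∪ {C⁻_{ij} : i < j}`. -/
noncomputable def Xfam (n : ℕ) : PBIdx n → PMat n
  | .inl p => Am n p.1 p.2
  | .inr (.inl p) => Bp n p.1.1 p.1.2
  | .inr (.inr p) => Cm n p.1.1 p.1.2

/-- The vector representation `V = ℂ^{n|n}`. -/
abbrev Vsp (n : ℕ) := PIdx n → ℂ

/-- The standard basis vector `v_r` of `V`. -/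
noncomputable def sv (n : ℕ) (r : PIdx n) : Vsp n := Pi.single r 1

/-- The parity of a standard basis vector: `v_i` is even, `v_{i'}` is odd. -/
def par {n : ℕ} : PIdx n → ℕ := Sum.elim (fun _ => 0) (fun _ => 1)

/-- The odd bilinear form `β` on `V`. -/
noncomputable def bForm (n : ℕ) (u w : Vsp n) : ℂ :=
  ∑ i : Fin n, (u (.inl i) * w (.inr i) + u (.inr i) * w (.inl i))

/-- The action of a summand `x ⊗ z` of `Ω`, with `x, z` homogeneous of parity `p`, on the
basis tensor `v_r ⊗ v_s`: `(x ⊗ z)(v_r ⊗ v_s) = (−1)^{p·par r} (x v_r) ⊗ (z v_s)`. -/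
noncomputable def tensAct (n : ℕ) (p : ℕ) (x z : PMat n) (r s : PIdx n) :
    Vsp n ⊗[ℂ] Vsp n :=
  ((-1 : ℂ) ^ (p * par r)) • (x.mulVec (sv n r) ⊗ₜ[ℂ] z.mulVec (sv n s))

/-- The action of the fake Casimir
`Ω = Σ_{i,j} A⁻_{ij} ⊗ A⁺_{ji} − ½ Σ_i B⁺_{ii} ⊗ C⁺_{ii} − Σ_{i<j} B⁺_{ij} ⊗ C⁺_{ji}
+ Σ_{i<j} C⁻_{ij} ⊗ B⁻_{ji}` on the basis tensor `v_r ⊗ v_s` of `V ⊗ V`. -/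
noncomputable def OmegaAct (n : ℕ) (r s : PIdx n) : Vsp n ⊗[ℂ] Vsp n :=
  (∑ i : Fin n, ∑ j : Fin n, tensAct n 0 (Am n i j) (Ap n j i) r s)
    - (1 / 2 : ℂ) • (∑ i : Fin n, tensAct n 1 (Bp n i i) (Cp n i i) r s)
    - (∑ i : Fin n, ∑ j : Fin n, if i < j then tensAct n 1 (Bp n i j) (Cp n j i) r s else 0)
    + (∑ i : Fin n, ∑ j : Fin n, if i < j then tensAct n 1 (Cm n i j) (Bm n j i) r s else 0)

lemma mulVec_Eu (n : ℕ) (a b c p : PIdx n) :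
    (Eu n a b).mulVec (sv n c) p = if a = p ∧ b = c then 1 else 0 := by
  simp [Eu, sv, Matrix.mulVec, Matrix.single, dotProduct, Pi.single_apply, ite_and,
    Finset.sum_ite_eq]

lemma sv_apply (n : ℕ) (a p : PIdx n) : sv n a p = if a = p then 1 else 0 := by
  simp [sv, Pi.single_apply, eq_comm]

lemma ite_add_zero' (c : Prop) [Decidable c] (x y : ℂ) :
    (if c then x + y else 0) = (if c then x else 0) + (if c then y else 0) := by
  split_ifs <;> simp

lemma ite_sub_zero' (c : Prop) [Decidable c] (x y : ℂ) :
    (if c then x - y else 0) = (if c then x else 0) - (if c then y else 0) := by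
  split_ifs <;> simp

lemma ite_neg_zero' (c : Prop) [Decidable c] (x : ℂ) :
    (if c then -x else 0) = -(if c then x else 0) := by
  split_ifs <;> simp

lemma sum_pred_eq {n : ℕ} (P : Fin n → Prop) [DecidablePred P] (c : Fin n) (f : Fin n → ℂ) :
    (∑ y : Fin n, if P y then (if y = c then f y else 0) else 0) = if P c then f c else 0 := by
  have h : ∀ y : Fin n, (if P y then (if y = c then f y else 0) else 0)
      = if y = c then (if P y then f y else 0) else 0 := by
    intro y; by_cases hy : y = c
    · subst hy; simp
    · simp [hy]
  simp_rw [h, Finset.sum_ite_eq', Finset.mem_univ, if_true]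

lemma sum_pred_eq' {n : ℕ} (P : Fin n → Prop) [DecidablePred P] (c : Fin n) (f : Fin n → ℂ) :
    (∑ y : Fin n, if P y then (if c = y then f y else 0) else 0) = if P c then f c else 0 := by
  have h : ∀ y : Fin n, (if c = y then f y else 0) = if y = c then f y else 0 := by
    intro y; by_cases hy : y = c
    · subst hy; simp
    · simp [hy, show ¬(c = y) from fun h => hy h.symm]
  simp_rw [h, sum_pred_eq]

lemma sum_pred_prop {n : ℕ} (P : Fin n → Prop) [DecidablePred P] (q : Prop) [Decidable q]
    (f : Fin n → ℂ) :
    (∑ y : Fin n, if P y then (if q then f y else 0) else 0)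
      = if q then (∑ y : Fin n, if P y then f y else 0) else 0 := by
  by_cases hq : q <;> simp [hq]

lemma repr_ite (n : ℕ) (c : Prop) [Decidable c] (v : Vsp n ⊗[ℂ] Vsp n) (pq : PIdx n × PIdx n) :
    (((Pi.basisFun ℂ (PIdx n)).tensorProduct (Pi.basisFun ℂ (PIdx n))).repr
      (if c then v else 0)) pq =
    if c then (((Pi.basisFun ℂ (PIdx n)).tensorProduct (Pi.basisFun ℂ (PIdx n))).repr v) pq
    else 0 := by
  split_ifs <;> simp

set_option maxHeartbeats 4000000 in
/-- the action of `Ω` on `V ⊗ V` equals `σ + β*∘β`; on basis vectors,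
`Ω·(v_r ⊗ v_s) = (−1)^{par r · par s} v_s ⊗ v_r + β(v_r ⊗ v_s)·Σᵢ(vᵢ ⊗ v_{i'} − v_{i'} ⊗ vᵢ)`. -/
theorem statement3 (n : ℕ) (hn : 1 ≤ n) (r s : PIdx n) :
    OmegaAct n r s =
      ((-1 : ℂ) ^ (par r * par s)) • (sv n s ⊗ₜ[ℂ] sv n r) +
        bForm n (sv n r) (sv n s) •
          ∑ i : Fin n, (sv n (.inl i) ⊗ₜ[ℂ] sv n (.inr i) - sv n (.inr i) ⊗ₜ[ℂ] sv n (.inl i)) := by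
  classical
  refine Module.Basis.ext_elem ((Pi.basisFun ℂ (PIdx n)).tensorProduct (Pi.basisFun ℂ (PIdx n)))
    fun pq => ?_
  obtain ⟨p, q⟩ := pq
  obtain a | a := r <;> obtain b | b := s <;> obtain p | p := p <;> obtain q | q := q <;>
  · simp only [OmegaAct, tensAct, par, Sum.elim_inl, Sum.elim_inr, mul_zero, mul_one, pow_zero,
      pow_one, one_smul, neg_smul, map_sum, map_sub, map_add, map_smul, map_neg, Finsupp.coe_sub,
      Finsupp.coe_add, Finsupp.coe_smul, Finsupp.coe_neg, Pi.sub_apply, Pi.add_apply,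
      Pi.smul_apply, Pi.neg_apply, Finset.sum_apply, smul_eq_mul, map_zero,
      Finsupp.coe_zero, Pi.zero_apply, Module.Basis.tensorProduct_repr_tmul_apply, Pi.basisFun_repr,
      Am, Ap, Bp, Bm, Cp, Cm, Matrix.sub_mulVec, Matrix.add_mulVec,
      TensorProduct.sub_tmul, TensorProduct.add_tmul, TensorProduct.tmul_sub,
      TensorProduct.tmul_add, Finset.sum_apply', mulVec_Eu, sv_apply, bForm, ite_apply, repr_ite,
      ite_add_zero', ite_sub_zero', ite_neg_zero', neg_add, neg_neg, neg_sub, Finset.sum_neg_distrib, mul_ite, ite_mul, mul_one, one_mul, mul_zero, zero_mul,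
      ite_and, Sum.inl.injEq, Sum.inr.injEq, reduceCtorEq, if_false, if_true, ite_self,
      Finset.sum_const_zero, sub_zero, zero_sub, add_zero, zero_add, neg_zero, sub_self,
      Finset.sum_sub_distrib, Finset.sum_add_distrib, Finset.sum_neg_distrib]
    all_goals try simp only [ite_add_zero', ite_sub_zero', ite_neg_zero', neg_add, neg_neg, neg_sub, sum_pred_eq, sum_pred_eq', sum_pred_prop, Finset.sum_ite_eq, Finset.sum_ite_eq',
      Finset.mem_univ, ite_and, Sum.inl.injEq, Sum.inr.injEq, reduceCtorEq, if_false, if_true,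
      ite_self, Finset.sum_const_zero, sub_zero, zero_sub, add_zero, zero_add, neg_zero, sub_self,
      mul_ite, ite_mul, mul_one, one_mul, mul_zero, zero_mul,
      Finset.sum_sub_distrib, Finset.sum_add_distrib, Finset.sum_neg_distrib]
    all_goals
      (split_ifs <;> subst_vars <;>
        first
          | ring1
          | (exfalso; simp_all only [Fin.lt_def, Fin.ext_iff, not_true] <;> omega))
end

section
/- Fix an integer a ≥ 2, a commutative ℂ-algebra R, and ħ ∈ R. Let B be the R-algebra presented by generators s_1,…,s_{a−1}, e_1,…,e_{a−1}, y_1,…,y_a subject only to relations (VW1)–(VW5), (VW7), and (VW9) (i.e. omitting the idempotent relations (VW6) and the unwrapping relations (VW8)). Then (VW6) and (VW8) hold automatically in B: e_i² = 0 for all 1 ≤ i ≤ a−1, and e_1 y_1^k e_1 = 0 for all k ≥ 1. -/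
/-- Generators of the (affine) VW superalgebra on `a` strands:
`s i`, `e i` for `i : Fin (a-1)` (0-based, so `s i` is the paper's `s_{i+1}`),
and `y j` for `j : Fin a` (0-based, so `y j` is the paper's `y_{j+1}`). -/
inductive VWGen (a : ℕ) : Type
  | s : Fin (a - 1) → VWGen a
  | e : Fin (a - 1) → VWGen a
  | y : Fin a → VWGen a

/-- The generator `s_i` inside the free algebra. -/
noncomputable def Sf (a : ℕ) (R : Type) [CommRing R] (i : Fin (a - 1)) :
    FreeAlgebra R (VWGen a) := FreeAlgebra.ι R (VWGen.s i)

/-- The generator `e_i` inside the free algebra. -/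
noncomputable def Ef (a : ℕ) (R : Type) [CommRing R] (i : Fin (a - 1)) :
    FreeAlgebra R (VWGen a) := FreeAlgebra.ι R (VWGen.e i)

/-- The generator `y_j` inside the free algebra. -/
noncomputable def Yf (a : ℕ) (R : Type) [CommRing R] (j : Fin a) :
    FreeAlgebra R (VWGen a) := FreeAlgebra.ι R (VWGen.y j)

/-- The scalar `hb` inside the free algebra. -/
noncomputable def Hf (a : ℕ) (R : Type) [CommRing R] (hb : R) :
    FreeAlgebra R (VWGen a) := algebraMap R (FreeAlgebra R (VWGen a)) hb

/-- The defining relations (VW1)-(VW5), (VW7), (VW9) — i.e. omitting the idempotent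
relations (VW6) and the unwrapping relations (VW8) — with 0-based indices. -/
inductive VWRelNo68 (a : ℕ) (R : Type) [CommRing R] (hb : R) :
    FreeAlgebra R (VWGen a) → FreeAlgebra R (VWGen a) → Prop
  -- (VW1)
  | vw1 (i : Fin (a - 1)) : VWRelNo68 a R hb (Sf a R i * Sf a R i) 1
  -- (VW2)
  | vw2a (i j : Fin (a - 1)) (h : (i : ℕ) + 1 < j ∨ (j : ℕ) + 1 < i) :
      VWRelNo68 a R hb (Sf a R i * Ef a R j) (Ef a R j * Sf a R i)
  | vw2b (i j : Fin (a - 1)) (h : (i : ℕ) + 1 < j ∨ (j : ℕ) + 1 < i) :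
      VWRelNo68 a R hb (Ef a R i * Ef a R j) (Ef a R j * Ef a R i)
  | vw2c (i : Fin (a - 1)) (j : Fin a) (h1 : (j : ℕ) ≠ i) (h2 : (j : ℕ) ≠ (i : ℕ) + 1) :
      VWRelNo68 a R hb (Ef a R i * Yf a R j) (Yf a R j * Ef a R i)
  | vw2d (i j : Fin a) : VWRelNo68 a R hb (Yf a R i * Yf a R j) (Yf a R j * Yf a R i)
  -- (VW3)
  | vw3a (i j : Fin (a - 1)) (h : (i : ℕ) + 1 < j ∨ (j : ℕ) + 1 < i) :
      VWRelNo68 a R hb (Sf a R i * Sf a R j) (Sf a R j * Sf a R i)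
  | vw3b (i : ℕ) (h1 : i < a - 1) (h2 : i + 1 < a - 1) :
      VWRelNo68 a R hb (Sf a R ⟨i, h1⟩ * Sf a R ⟨i + 1, h2⟩ * Sf a R ⟨i, h1⟩)
        (Sf a R ⟨i + 1, h2⟩ * Sf a R ⟨i, h1⟩ * Sf a R ⟨i + 1, h2⟩)
  | vw3c (i : Fin (a - 1)) (j : Fin a) (h1 : (j : ℕ) ≠ i) (h2 : (j : ℕ) ≠ (i : ℕ) + 1) :
      VWRelNo68 a R hb (Sf a R i * Yf a R j) (Yf a R j * Sf a R i)
  -- (VW4)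
  | vw4a (i : ℕ) (h1 : i < a - 1) (h2 : i + 1 < a - 1) :
      VWRelNo68 a R hb (Ef a R ⟨i + 1, h2⟩ * Ef a R ⟨i, h1⟩ * Ef a R ⟨i + 1, h2⟩) (-Ef a R ⟨i + 1, h2⟩)
  | vw4b (i : ℕ) (h1 : i < a - 1) (h2 : i + 1 < a - 1) :
      VWRelNo68 a R hb (Ef a R ⟨i, h1⟩ * Ef a R ⟨i + 1, h2⟩ * Ef a R ⟨i, h1⟩) (-Ef a R ⟨i, h1⟩)
  -- (VW5)
  | vw5a (i : Fin (a - 1)) : VWRelNo68 a R hb (Ef a R i * Sf a R i) (Ef a R i)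
  | vw5b (i : Fin (a - 1)) : VWRelNo68 a R hb (Sf a R i * Ef a R i) (-Ef a R i)
  | vw5c (i : ℕ) (h1 : i < a - 1) (h2 : i + 1 < a - 1) :
      VWRelNo68 a R hb (Sf a R ⟨i, h1⟩ * Ef a R ⟨i + 1, h2⟩ * Ef a R ⟨i, h1⟩)
        (Sf a R ⟨i + 1, h2⟩ * Ef a R ⟨i, h1⟩)
  | vw5d (i : ℕ) (h1 : i < a - 1) (h2 : i + 1 < a - 1) :
      VWRelNo68 a R hb (Sf a R ⟨i + 1, h2⟩ * Ef a R ⟨i, h1⟩ * Ef a R ⟨i + 1, h2⟩)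
        (-(Sf a R ⟨i, h1⟩ * Ef a R ⟨i + 1, h2⟩))
  | vw5e (i : ℕ) (h1 : i < a - 1) (h2 : i + 1 < a - 1) :
      VWRelNo68 a R hb (Ef a R ⟨i + 1, h2⟩ * Ef a R ⟨i, h1⟩ * Sf a R ⟨i + 1, h2⟩)
        (Ef a R ⟨i + 1, h2⟩ * Sf a R ⟨i, h1⟩)
  | vw5f (i : ℕ) (h1 : i < a - 1) (h2 : i + 1 < a - 1) :
      VWRelNo68 a R hb (Ef a R ⟨i, h1⟩ * Ef a R ⟨i + 1, h2⟩ * Sf a R ⟨i, h1⟩)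
        (-(Ef a R ⟨i, h1⟩ * Sf a R ⟨i + 1, h2⟩))
  -- (VW7)
  | vw7a (i : ℕ) (h1 : i < a - 1) (hy : i < a) (hy2 : i + 1 < a) :
      VWRelNo68 a R hb (Sf a R ⟨i, h1⟩ * Yf a R ⟨i, hy⟩ - Yf a R ⟨i + 1, hy2⟩ * Sf a R ⟨i, h1⟩)
        (-(Hf a R hb * Ef a R ⟨i, h1⟩) - Hf a R hb)
  | vw7b (i : ℕ) (h1 : i < a - 1) (hy : i < a) (hy2 : i + 1 < a) :
      VWRelNo68 a R hb (Yf a R ⟨i, hy⟩ * Sf a R ⟨i, h1⟩ - Sf a R ⟨i, h1⟩ * Yf a R ⟨i + 1, hy2⟩)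
        (Hf a R hb * Ef a R ⟨i, h1⟩ - Hf a R hb)
  -- (VW9)
  | vw9a (i : ℕ) (h1 : i < a - 1) (hy : i < a) (hy2 : i + 1 < a) :
      VWRelNo68 a R hb (Ef a R ⟨i, h1⟩ * (Yf a R ⟨i + 1, hy2⟩ - Yf a R ⟨i, hy⟩))
        (Hf a R hb * Ef a R ⟨i, h1⟩)
  | vw9b (i : ℕ) (h1 : i < a - 1) (hy : i < a) (hy2 : i + 1 < a) :
      VWRelNo68 a R hb ((Yf a R ⟨i + 1, hy2⟩ - Yf a R ⟨i, hy⟩) * Ef a R ⟨i, h1⟩)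
        (-(Hf a R hb * Ef a R ⟨i, h1⟩))


/-- The algebra presented by generators `s_i, e_i, y_j` subject only to
(VW1)-(VW5), (VW7) and (VW9). -/
noncomputable abbrev VWB (a : ℕ) (R : Type) [CommRing R] (hb : R) : Type :=
  RingQuot (VWRelNo68 a R hb)

/-- The image of the generator `s_i` in `B`. -/
noncomputable def sgB (a : ℕ) (R : Type) [CommRing R] (hb : R) (i : Fin (a - 1)) : VWB a R hb :=
  RingQuot.mkAlgHom R (VWRelNo68 a R hb) (Sf a R i)

/-- The image of the generator `e_i` in `B`. -/
noncomputable def egB (a : ℕ) (R : Type) [CommRing R] (hb : R) (i : Fin (a - 1)) : VWB a R hb :=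
  RingQuot.mkAlgHom R (VWRelNo68 a R hb) (Ef a R i)

/-- The image of the generator `y_j` in `B`. -/
noncomputable def ygB (a : ℕ) (R : Type) [CommRing R] (hb : R) (j : Fin a) : VWB a R hb :=
  RingQuot.mkAlgHom R (VWRelNo68 a R hb) (Yf a R j)

lemma aux_sq {B : Type} [Ring B] (e s : B)
    (htwo : ∀ x : B, x + x = 0 → x = 0)
    (hes : e * s = e) (hse : s * e = -e) : e * e = 0 := by
  have h : e * e = -(e * e) := by
    nth_rewrite 1 [← hes]
    rw [mul_assoc, hse, mul_neg]
  exact htwo _ (by nth_rewrite 2 [h]; exact add_neg_cancel _)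

lemma aux_key {B : Type} [Ring B] (e s y z H : B)
    (hH : ∀ x : B, H * x = x * H)
    (htwo : ∀ x : B, x + x = 0 → x = 0)
    (hes : e * s = e) (hse : s * e = -e)
    (hze : z * e = -(H * e) + y * e)
    (hyz : z * y = y * z)
    (hsy : s * y = -(H * e) - H + z * s) :
    ∀ n j m : ℕ, j + m = n → e * z ^ j * y ^ m * e = 0 := by
  have hee : e * e = 0 := aux_sq e s htwo hes hse
  intro n
  induction n using Nat.strong_induction_on with
  | _ n IH =>
    cases n with
    | zero =>
      intro j m hjm
      obtain ⟨rfl, rfl⟩ : j = 0 ∧ m = 0 := by omega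
      simpa using hee
    | succ N =>
      have stepA : ∀ j m, j + m = N →
          e * z ^ (j + 1) * y ^ m * e = e * z ^ j * y ^ (m + 1) * e := by
        intro j m hjm
        have h0 : e * z ^ j * y ^ m * e = 0 := IH N (Nat.lt_succ_self N) j m hjm
        have hc : Commute z y := hyz
        have hzym : z * y ^ m = y ^ m * z := (hc.pow_right m)
        calc e * z ^ (j + 1) * y ^ m * e
            = e * z ^ j * (z * y ^ m) * e := by rw [pow_succ]; noncomm_ring
          _ = e * z ^ j * (y ^ m * z) * e := by rw [hzym]
          _ = e * z ^ j * y ^ m * (z * e) := by noncomm_ring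
          _ = e * z ^ j * y ^ m * (-(H * e) + y * e) := by rw [hze]
          _ = e * z ^ j * y ^ (m + 1) * e - (e * z ^ j * y ^ m) * H * e := by
              rw [pow_succ]; noncomm_ring
          _ = e * z ^ j * y ^ (m + 1) * e - H * (e * z ^ j * y ^ m) * e := by
              rw [← hH (e * z ^ j * y ^ m)]
          _ = e * z ^ j * y ^ (m + 1) * e - H * (e * z ^ j * y ^ m * e) := by
              noncomm_ring
          _ = e * z ^ j * y ^ (m + 1) * e := by rw [h0, mul_zero, sub_zero]
      have chainA : ∀ j m, j + m = N + 1 →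
          e * z ^ j * y ^ m * e = e * y ^ (N + 1) * e := by
        intro j
        induction j with
        | zero =>
          intro m hm
          obtain rfl : m = N + 1 := by omega
          simp
        | succ j hj =>
          intro m hm
          rw [stepA j m (by omega)]
          exact hj (m + 1) (by omega)
      have chainB : ∀ m j, j + m = N + 1 →
          e * z ^ j * s * y ^ m * e = e * z ^ (N + 1) * s * e := by
        intro m
        induction m with
        | zero =>
          intro j hj
          obtain rfl : j = N + 1 := by omega
          simp
        | succ m hm =>
          intro j hj
          have h0 : e * z ^ j * y ^ m * e = 0 := IH N (Nat.lt_succ_self N) j m (by omega)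
          have h1 : e * z ^ j * e = 0 := by
            have := IH j (by omega) j 0 (by omega)
            simpa using this
          calc e * z ^ j * s * y ^ (m + 1) * e
              = e * z ^ j * (s * y) * y ^ m * e := by rw [pow_succ']; noncomm_ring
            _ = e * z ^ j * (-(H * e) - H + z * s) * y ^ m * e := by rw [hsy]
            _ = e * z ^ (j + 1) * s * y ^ m * e - (e * z ^ j) * H * (e * (y ^ m * e))
                - (e * z ^ j) * H * (y ^ m * e) := by rw [pow_succ]; noncomm_ring
            _ = e * z ^ (j + 1) * s * y ^ m * e - H * (e * z ^ j) * (e * (y ^ m * e))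
                - H * (e * z ^ j) * (y ^ m * e) := by rw [← hH (e * z ^ j)]
            _ = e * z ^ (j + 1) * s * y ^ m * e - H * ((e * z ^ j * e) * (y ^ m * e))
                - H * (e * z ^ j * y ^ m * e) := by noncomm_ring
            _ = e * z ^ (j + 1) * s * y ^ m * e := by
                simp [h0, h1]
            _ = e * z ^ (N + 1) * s * e := hm (j + 1) (by omega)
      have hA : e * z ^ (N + 1) * e = e * y ^ (N + 1) * e := by
        have := chainA (N + 1) 0 (by omega)
        simpa using this
      have key1 : e * y ^ (N + 1) * e = -(e * y ^ (N + 1) * e) := by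
        calc e * y ^ (N + 1) * e
            = e * z ^ 0 * s * y ^ (N + 1) * e := by rw [pow_zero, mul_one, hes]
          _ = e * z ^ (N + 1) * s * e := chainB (N + 1) 0 (by omega)
          _ = e * z ^ (N + 1) * (-e) := by rw [mul_assoc, hse]
          _ = -(e * z ^ (N + 1) * e) := by noncomm_ring
          _ = -(e * y ^ (N + 1) * e) := by rw [hA]
      have hz0 : e * y ^ (N + 1) * e = 0 :=
        htwo _ (by nth_rewrite 2 [key1]; exact add_neg_cancel _)
      intro j m hjm
      rw [chainA j m hjm]
      exact hz0

/-- in the algebra presented by (VW1)-(VW5), (VW7), (VW9) only (omitting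
(VW6) and (VW8)), the relations (VW6) `e_i² = 0` and (VW8) `e_1 y_1^k e_1 = 0` (k ≥ 1)
hold automatically. (Indices are 0-based, so `e_1, y_1` of the paper are `egB ... 0`,
`ygB ... 0`.) -/
theorem statement7 (a : ℕ) (ha : 2 ≤ a) (R : Type) [CommRing R] [Algebra ℂ R] (hb : R) :
    (∀ i : Fin (a - 1), egB a R hb i * egB a R hb i = 0) ∧
    (∀ k : ℕ, 1 ≤ k →
      egB a R hb (⟨0, by omega⟩ : Fin (a - 1)) * ygB a R hb (⟨0, by omega⟩ : Fin a) ^ k *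
        egB a R hb (⟨0, by omega⟩ : Fin (a - 1)) = 0) := by
  have htwo : ∀ x : VWB a R hb, x + x = 0 → x = 0 := by
    intro x hx
    have hc : (algebraMap ℂ R (2⁻¹ : ℂ)) + (algebraMap ℂ R (2⁻¹ : ℂ)) = 1 := by
      rw [← map_add]
      norm_num
    calc x = (1 : R) • x := (one_smul R x).symm
      _ = ((algebraMap ℂ R (2⁻¹ : ℂ)) + (algebraMap ℂ R (2⁻¹ : ℂ))) • x := by rw [hc]
      _ = (algebraMap ℂ R (2⁻¹ : ℂ)) • (x + x) := by rw [add_smul, smul_add]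
      _ = 0 := by rw [hx, smul_zero]
  constructor
  · intro i
    have hes := RingQuot.mkAlgHom_rel R (VWRelNo68.vw5a (a := a) (R := R) (hb := hb) i)
    simp only [map_mul] at hes
    have hse := RingQuot.mkAlgHom_rel R (VWRelNo68.vw5b (a := a) (R := R) (hb := hb) i)
    simp only [map_mul, map_neg] at hse
    exact aux_sq _ _ htwo hes hse
  · intro k _
    have h1 : 0 < a - 1 := by omega
    have h2 : 0 < a := by omega
    have h3 : 1 < a := by omega
    have hes := RingQuot.mkAlgHom_rel R (VWRelNo68.vw5a (a := a) (R := R) (hb := hb) ⟨0, h1⟩)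
    simp only [map_mul] at hes
    have hse := RingQuot.mkAlgHom_rel R (VWRelNo68.vw5b (a := a) (R := R) (hb := hb) ⟨0, h1⟩)
    simp only [map_mul, map_neg] at hse
    have t9 := RingQuot.mkAlgHom_rel R (VWRelNo68.vw9b (a := a) (R := R) (hb := hb) 0 h1 h2 h3)
    simp only [map_mul, map_sub, map_neg, sub_mul] at t9
    rw [sub_eq_iff_eq_add] at t9
    have t2 := RingQuot.mkAlgHom_rel R
      (VWRelNo68.vw2d (a := a) (R := R) (hb := hb) ⟨1, h3⟩ ⟨0, h2⟩)
    simp only [map_mul] at t2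
    have t7 := RingQuot.mkAlgHom_rel R (VWRelNo68.vw7a (a := a) (R := R) (hb := hb) 0 h1 h2 h3)
    simp only [map_mul, map_sub, map_neg] at t7
    rw [sub_eq_iff_eq_add] at t7
    have hH : ∀ x : VWB a R hb,
        RingQuot.mkAlgHom R (VWRelNo68 a R hb) (Hf a R hb) * x
          = x * RingQuot.mkAlgHom R (VWRelNo68 a R hb) (Hf a R hb) := by
      intro x
      have hH0 : RingQuot.mkAlgHom R (VWRelNo68 a R hb) (Hf a R hb)
          = algebraMap R (VWB a R hb) hb := by
        simp only [Hf]
        exact AlgHom.commutes _ hb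
      rw [hH0]
      exact Algebra.commutes hb x
    have main := aux_key
      (RingQuot.mkAlgHom R (VWRelNo68 a R hb) (Ef a R ⟨0, h1⟩))
      (RingQuot.mkAlgHom R (VWRelNo68 a R hb) (Sf a R ⟨0, h1⟩))
      (RingQuot.mkAlgHom R (VWRelNo68 a R hb) (Yf a R ⟨0, h2⟩))
      (RingQuot.mkAlgHom R (VWRelNo68 a R hb) (Yf a R ⟨1, h3⟩))
      (RingQuot.mkAlgHom R (VWRelNo68 a R hb) (Hf a R hb))
      hH htwo hes hse t9 t2 t7 k 0 k (by omega)
    simp only [pow_zero, mul_one] at main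
    exact main
end

section
/- Fix an integer a ≥ 2 and work in A_ħ = A(ℂ[ħ], ħ). For every 1 ≤ k ≤ a−1, the element φ(D) commutes with s_k, where D = ∏_{1≤i<j≤a}((y_i − y_j)² − ħ²) ∈ ℂ[ħ][y_1,…,y_a]; that is, φ(D)·s_k = s_k·φ(D). -/
/-- The defining relations (VW1)-(VW9) of the affine VW superalgebra `A(R,hb)`
(all indices are 0-based translations of the 1-based indices of the paper). -/
inductive VWRel (a : ℕ) (R : Type) [CommRing R] (hb : R) :
    FreeAlgebra R (VWGen a) → FreeAlgebra R (VWGen a) → Prop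
  -- (VW1)
  | vw1 (i : Fin (a - 1)) : VWRel a R hb (Sf a R i * Sf a R i) 1
  -- (VW2)
  | vw2a (i j : Fin (a - 1)) (h : (i : ℕ) + 1 < j ∨ (j : ℕ) + 1 < i) :
      VWRel a R hb (Sf a R i * Ef a R j) (Ef a R j * Sf a R i)
  | vw2b (i j : Fin (a - 1)) (h : (i : ℕ) + 1 < j ∨ (j : ℕ) + 1 < i) :
      VWRel a R hb (Ef a R i * Ef a R j) (Ef a R j * Ef a R i)
  | vw2c (i : Fin (a - 1)) (j : Fin a) (h1 : (j : ℕ) ≠ i) (h2 : (j : ℕ) ≠ (i : ℕ) + 1) :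
      VWRel a R hb (Ef a R i * Yf a R j) (Yf a R j * Ef a R i)
  | vw2d (i j : Fin a) : VWRel a R hb (Yf a R i * Yf a R j) (Yf a R j * Yf a R i)
  -- (VW3)
  | vw3a (i j : Fin (a - 1)) (h : (i : ℕ) + 1 < j ∨ (j : ℕ) + 1 < i) :
      VWRel a R hb (Sf a R i * Sf a R j) (Sf a R j * Sf a R i)
  | vw3b (i : ℕ) (h1 : i < a - 1) (h2 : i + 1 < a - 1) :
      VWRel a R hb (Sf a R ⟨i, h1⟩ * Sf a R ⟨i + 1, h2⟩ * Sf a R ⟨i, h1⟩)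
        (Sf a R ⟨i + 1, h2⟩ * Sf a R ⟨i, h1⟩ * Sf a R ⟨i + 1, h2⟩)
  | vw3c (i : Fin (a - 1)) (j : Fin a) (h1 : (j : ℕ) ≠ i) (h2 : (j : ℕ) ≠ (i : ℕ) + 1) :
      VWRel a R hb (Sf a R i * Yf a R j) (Yf a R j * Sf a R i)
  -- (VW4)
  | vw4a (i : ℕ) (h1 : i < a - 1) (h2 : i + 1 < a - 1) :
      VWRel a R hb (Ef a R ⟨i + 1, h2⟩ * Ef a R ⟨i, h1⟩ * Ef a R ⟨i + 1, h2⟩) (-Ef a R ⟨i + 1, h2⟩)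
  | vw4b (i : ℕ) (h1 : i < a - 1) (h2 : i + 1 < a - 1) :
      VWRel a R hb (Ef a R ⟨i, h1⟩ * Ef a R ⟨i + 1, h2⟩ * Ef a R ⟨i, h1⟩) (-Ef a R ⟨i, h1⟩)
  -- (VW5)
  | vw5a (i : Fin (a - 1)) : VWRel a R hb (Ef a R i * Sf a R i) (Ef a R i)
  | vw5b (i : Fin (a - 1)) : VWRel a R hb (Sf a R i * Ef a R i) (-Ef a R i)
  | vw5c (i : ℕ) (h1 : i < a - 1) (h2 : i + 1 < a - 1) :
      VWRel a R hb (Sf a R ⟨i, h1⟩ * Ef a R ⟨i + 1, h2⟩ * Ef a R ⟨i, h1⟩)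
        (Sf a R ⟨i + 1, h2⟩ * Ef a R ⟨i, h1⟩)
  | vw5d (i : ℕ) (h1 : i < a - 1) (h2 : i + 1 < a - 1) :
      VWRel a R hb (Sf a R ⟨i + 1, h2⟩ * Ef a R ⟨i, h1⟩ * Ef a R ⟨i + 1, h2⟩)
        (-(Sf a R ⟨i, h1⟩ * Ef a R ⟨i + 1, h2⟩))
  | vw5e (i : ℕ) (h1 : i < a - 1) (h2 : i + 1 < a - 1) :
      VWRel a R hb (Ef a R ⟨i + 1, h2⟩ * Ef a R ⟨i, h1⟩ * Sf a R ⟨i + 1, h2⟩)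
        (Ef a R ⟨i + 1, h2⟩ * Sf a R ⟨i, h1⟩)
  | vw5f (i : ℕ) (h1 : i < a - 1) (h2 : i + 1 < a - 1) :
      VWRel a R hb (Ef a R ⟨i, h1⟩ * Ef a R ⟨i + 1, h2⟩ * Sf a R ⟨i, h1⟩)
        (-(Ef a R ⟨i, h1⟩ * Sf a R ⟨i + 1, h2⟩))
  -- (VW6)
  | vw6 (i : Fin (a - 1)) : VWRel a R hb (Ef a R i * Ef a R i) 0
  -- (VW7)
  | vw7a (i : ℕ) (h1 : i < a - 1) (hy : i < a) (hy2 : i + 1 < a) :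
      VWRel a R hb (Sf a R ⟨i, h1⟩ * Yf a R ⟨i, hy⟩ - Yf a R ⟨i + 1, hy2⟩ * Sf a R ⟨i, h1⟩)
        (-(Hf a R hb * Ef a R ⟨i, h1⟩) - Hf a R hb)
  | vw7b (i : ℕ) (h1 : i < a - 1) (hy : i < a) (hy2 : i + 1 < a) :
      VWRel a R hb (Yf a R ⟨i, hy⟩ * Sf a R ⟨i, h1⟩ - Sf a R ⟨i, h1⟩ * Yf a R ⟨i + 1, hy2⟩)
        (Hf a R hb * Ef a R ⟨i, h1⟩ - Hf a R hb)
  -- (VW8)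
  | vw8 (k : ℕ) (hk : 1 ≤ k) (h0 : 0 < a - 1) (h0' : 0 < a) :
      VWRel a R hb (Ef a R ⟨0, h0⟩ * Yf a R ⟨0, h0'⟩ ^ k * Ef a R ⟨0, h0⟩) 0
  -- (VW9)
  | vw9a (i : ℕ) (h1 : i < a - 1) (hy : i < a) (hy2 : i + 1 < a) :
      VWRel a R hb (Ef a R ⟨i, h1⟩ * (Yf a R ⟨i + 1, hy2⟩ - Yf a R ⟨i, hy⟩))
        (Hf a R hb * Ef a R ⟨i, h1⟩)
  | vw9b (i : ℕ) (h1 : i < a - 1) (hy : i < a) (hy2 : i + 1 < a) :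
      VWRel a R hb ((Yf a R ⟨i + 1, hy2⟩ - Yf a R ⟨i, hy⟩) * Ef a R ⟨i, h1⟩)
        (-(Hf a R hb * Ef a R ⟨i, h1⟩))

/-- The affine VW superalgebra `A(R,hb)` on `a` strands: the quotient of the free
`R`-algebra on the generators by the two-sided ideal generated by the relations. -/
noncomputable abbrev VWA (a : ℕ) (R : Type) [CommRing R] (hb : R) : Type :=
  RingQuot (VWRel a R hb)

/-- The image of the generator `s_i` in `A(R,hb)`. -/
noncomputable def sg (a : ℕ) (R : Type) [CommRing R] (hb : R) (i : Fin (a - 1)) : VWA a R hb :=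
  RingQuot.mkAlgHom R (VWRel a R hb) (Sf a R i)

/-- The image of the generator `e_i` in `A(R,hb)`. -/
noncomputable def eg (a : ℕ) (R : Type) [CommRing R] (hb : R) (i : Fin (a - 1)) : VWA a R hb :=
  RingQuot.mkAlgHom R (VWRel a R hb) (Ef a R i)

/-- The image of the generator `y_j` in `A(R,hb)`. -/
noncomputable def yg (a : ℕ) (R : Type) [CommRing R] (hb : R) (j : Fin a) : VWA a R hb :=
  RingQuot.mkAlgHom R (VWRel a R hb) (Yf a R j)

/-- The deformed squared Vandermonde polynomial `D = ∏_{i<j} ((y_i − y_j)² − hb²)`. -/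
noncomputable def Dpoly (a : ℕ) (R : Type) [CommRing R] (hb : R) : MvPolynomial (Fin a) R :=
  ∏ p ∈ Finset.univ.filter (fun p : Fin a × Fin a => p.1 < p.2),
    ((MvPolynomial.X p.1 - MvPolynomial.X p.2) ^ 2 - MvPolynomial.C (hb ^ 2))

theorem yg_comm (a : ℕ) (R : Type) [CommRing R] (hb : R) (i j : Fin a) :
    yg a R hb i * yg a R hb j = yg a R hb j * yg a R hb i := by
  have h := RingQuot.mkAlgHom_rel R (VWRel.vw2d (a := a) (R := R) (hb := hb) i j)
  simpa only [yg, map_mul] using h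

/-- The subalgebra of `A(R,ħ)` generated by the `y_j`; it is commutative. -/
noncomputable def ygAdjoin (a : ℕ) (R : Type) [CommRing R] (hb : R) : Subalgebra R (VWA a R hb) :=
  Algebra.adjoin R (Set.range (yg a R hb))

noncomputable instance (a : ℕ) (R : Type) [CommRing R] (hb : R) :
    CommRing (ygAdjoin a R hb) :=
  { (ygAdjoin a R hb).toRing with
    mul_comm := by
      have := Algebra.isMulCommutative_adjoin R (s := Set.range (yg a R hb)) (by
        rintro x ⟨i, rfl⟩ y ⟨j, rfl⟩
        exact yg_comm a R hb i j)
      exact this.is_comm.comm }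

/-- The `R`-algebra homomorphism `φ : R[y_1,…,y_a] → A(R,ħ)` sending the variable `y_j`
to the generator `y_j`. -/
noncomputable def vwphi (a : ℕ) (R : Type) [CommRing R] (hb : R) :
    MvPolynomial (Fin a) R →ₐ[R] VWA a R hb :=
  (ygAdjoin a R hb).val.comp
    (MvPolynomial.aeval (R := R)
      (fun j : Fin a =>
        (⟨yg a R hb j, Algebra.subset_adjoin ⟨j, rfl⟩⟩ : ygAdjoin a R hb)))
namespace VWProof

open MvPolynomial

variable {a : ℕ} {R : Type} [CommRing R] {hb : R}

/-- shorthand for the scalar ħ in the quotient algebra -/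
noncomputable def Hq (a : ℕ) (R : Type) [CommRing R] (hb : R) : VWA a R hb :=
  algebraMap R (VWA a R hb) hb

lemma Hq_comm (x : VWA a R hb) : Hq a R hb * x = x * Hq a R hb :=
  Algebra.commutes hb x

lemma rel_ss (k : ℕ) (h1 : k < a - 1) :
    sg a R hb ⟨k, h1⟩ * sg a R hb ⟨k, h1⟩ = 1 := by
  have h := RingQuot.mkAlgHom_rel R (VWRel.vw1 (a := a) (R := R) (hb := hb) ⟨k, h1⟩)
  simpa only [sg, map_mul, map_one] using h

lemma rel_su (k : ℕ) (h1 : k < a - 1) (hy : k < a) (hy2 : k + 1 < a) :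
    sg a R hb ⟨k, h1⟩ * yg a R hb ⟨k, hy⟩ =
      yg a R hb ⟨k + 1, hy2⟩ * sg a R hb ⟨k, h1⟩
        - Hq a R hb * eg a R hb ⟨k, h1⟩ - Hq a R hb := by
  have h := RingQuot.mkAlgHom_rel R (VWRel.vw7a (a := a) (R := R) (hb := hb) k h1 hy hy2)
  simp only [map_sub, map_mul, map_neg, Hf, AlgHom.commutes] at h
  rw [sub_eq_iff_eq_add] at h
  rw [show (sg a R hb ⟨k, h1⟩ : VWA a R hb) * yg a R hb ⟨k, hy⟩
      = RingQuot.mkAlgHom R (VWRel a R hb) (Sf a R ⟨k, h1⟩) *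
        RingQuot.mkAlgHom R (VWRel a R hb) (Yf a R ⟨k, hy⟩) from rfl, h]
  simp only [sg, eg, yg, Hq]
  abel

lemma rel_sv (k : ℕ) (h1 : k < a - 1) (hy : k < a) (hy2 : k + 1 < a) :
    sg a R hb ⟨k, h1⟩ * yg a R hb ⟨k + 1, hy2⟩ =
      yg a R hb ⟨k, hy⟩ * sg a R hb ⟨k, h1⟩
        - Hq a R hb * eg a R hb ⟨k, h1⟩ + Hq a R hb := by
  have h := RingQuot.mkAlgHom_rel R (VWRel.vw7b (a := a) (R := R) (hb := hb) k h1 hy hy2)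
  simp only [map_sub, map_mul, map_neg, Hf, AlgHom.commutes] at h
  rw [sub_eq_iff_eq_add] at h
  have h2 : (sg a R hb ⟨k, h1⟩ : VWA a R hb) * yg a R hb ⟨k + 1, hy2⟩
      = yg a R hb ⟨k, hy⟩ * sg a R hb ⟨k, h1⟩
        - (Hq a R hb * eg a R hb ⟨k, h1⟩ - Hq a R hb) := by
    simp only [sg, eg, yg, Hq]
    rw [h]; abel
  rw [h2]; abel

lemma rel_ve (k : ℕ) (h1 : k < a - 1) (hy : k < a) (hy2 : k + 1 < a) :
    (yg a R hb ⟨k + 1, hy2⟩ - yg a R hb ⟨k, hy⟩) * eg a R hb ⟨k, h1⟩ =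
      -(Hq a R hb * eg a R hb ⟨k, h1⟩) := by
  have h := RingQuot.mkAlgHom_rel R (VWRel.vw9b (a := a) (R := R) (hb := hb) k h1 hy hy2)
  simpa only [map_sub, map_mul, map_neg, Hf, AlgHom.commutes, sg, eg, yg, Hq] using h

lemma rel_ev (k : ℕ) (h1 : k < a - 1) (hy : k < a) (hy2 : k + 1 < a) :
    eg a R hb ⟨k, h1⟩ * (yg a R hb ⟨k + 1, hy2⟩ - yg a R hb ⟨k, hy⟩) =
      Hq a R hb * eg a R hb ⟨k, h1⟩ := by
  have h := RingQuot.mkAlgHom_rel R (VWRel.vw9a (a := a) (R := R) (hb := hb) k h1 hy hy2)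
  simpa only [map_sub, map_mul, Hf, AlgHom.commutes, sg, eg, yg, Hq] using h

lemma rel_sy (k : ℕ) (h1 : k < a - 1) (j : Fin a) (hj1 : (j : ℕ) ≠ k)
    (hj2 : (j : ℕ) ≠ k + 1) :
    sg a R hb ⟨k, h1⟩ * yg a R hb j = yg a R hb j * sg a R hb ⟨k, h1⟩ := by
  have h := RingQuot.mkAlgHom_rel R
    (VWRel.vw3c (a := a) (R := R) (hb := hb) ⟨k, h1⟩ j hj1 hj2)
  simpa only [map_mul, sg, yg] using h

end VWProof
namespace VWProof

open MvPolynomial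

section Abstract
variable {A : Type*} [Ring A]

lemma abs_flip (x y e h : A) (hx : (x - y) * e = -(h * e)) : (y - x) * e = h * e := by
  have hyx : y - x = -(x - y) := (neg_sub _ _).symm
  rw [hyx, neg_mul, hx, neg_neg]

lemma abs_Fe (w H e : A) (hH : ∀ x : A, H * x = x * H) (hwe : w * e = H * e) :
    (w ^ 2 - H ^ 2) * e = 0 := by
  have h2 : w ^ 2 * e = H ^ 2 * e := by
    rw [pow_two, pow_two, mul_assoc, hwe, ← mul_assoc, ← hH w, mul_assoc, hwe, ← mul_assoc]
  rw [sub_mul, h2, sub_self]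

lemma abs_sF (s w H : A) (hH : ∀ x : A, H * x = x * H)
    (hsw : s * w = -(w * s) - 2 * H) : s * (w ^ 2 - H ^ 2) = (w ^ 2 - H ^ 2) * s := by
  have h2 : s * (w * w) = w * (w * s) := by
    calc s * (w * w) = (s * w) * w := (mul_assoc _ _ _).symm
    _ = (-(w * s) - 2 * H) * w := by rw [hsw]
    _ = -(w * (s * w)) - 2 * (H * w) := by noncomm_ring
    _ = -(w * (-(w * s) - 2 * H)) - 2 * (w * H) := by rw [hsw, hH]
    _ = w * (w * s) := by noncomm_ring
  have hsH : s * H = H * s := (hH s).symm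
  have h3 : s * (H * H) = H * H * s := by
    rw [← mul_assoc, hsH, mul_assoc, hsH, ← mul_assoc]
  rw [mul_sub, sub_mul, pow_two, pow_two, ← mul_assoc, h3, mul_assoc w w s, ← h2, mul_assoc]

end Abstract

variable {a : ℕ} {R : Type} [CommRing R] {hb : R}

/-- the image of the special factor in the algebra -/
noncomputable def Fq (a : ℕ) (R : Type) [CommRing R] (hb : R) (k : ℕ)
    (hy : k < a) (hy2 : k + 1 < a) : VWA a R hb :=
  (yg a R hb ⟨k, hy⟩ - yg a R hb ⟨k + 1, hy2⟩) ^ 2 - Hq a R hb ^ 2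

lemma w_mul_e (k : ℕ) (h1 : k < a - 1) (hy : k < a) (hy2 : k + 1 < a) :
    (yg a R hb ⟨k, hy⟩ - yg a R hb ⟨k + 1, hy2⟩) * eg a R hb ⟨k, h1⟩ =
      Hq a R hb * eg a R hb ⟨k, h1⟩ := by
  exact abs_flip _ _ _ _ (rel_ve k h1 hy hy2)

lemma F_mul_e (k : ℕ) (h1 : k < a - 1) (hy : k < a) (hy2 : k + 1 < a) :
    Fq a R hb k hy hy2 * eg a R hb ⟨k, h1⟩ = 0 :=
  abs_Fe _ _ _ (fun x => Algebra.commutes hb x) (w_mul_e k h1 hy hy2)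

lemma s_mul_w (k : ℕ) (h1 : k < a - 1) (hy : k < a) (hy2 : k + 1 < a) :
    sg a R hb ⟨k, h1⟩ * (yg a R hb ⟨k, hy⟩ - yg a R hb ⟨k + 1, hy2⟩) =
      -((yg a R hb ⟨k, hy⟩ - yg a R hb ⟨k + 1, hy2⟩) * sg a R hb ⟨k, h1⟩)
        - 2 * Hq a R hb := by
  rw [mul_sub, rel_su k h1 hy hy2, rel_sv k h1 hy hy2, sub_mul, neg_sub, two_mul]
  abel

lemma s_F_comm (k : ℕ) (h1 : k < a - 1) (hy : k < a) (hy2 : k + 1 < a) :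
    sg a R hb ⟨k, h1⟩ * Fq a R hb k hy hy2 =
      Fq a R hb k hy hy2 * sg a R hb ⟨k, h1⟩ :=
  abs_sF _ _ _ (fun x => Algebra.commutes hb x) (s_mul_w k h1 hy hy2)

end VWProof
namespace VWProof

open MvPolynomial

section Abstract2
variable {A : Type*} [Ring A]

lemma abs_step_u (s P c G u v H e : A) (hH : ∀ x : A, H * x = x * H)
    (hsu : s * u = v * s - H * e - H) :
    (P * s + c + H * G) * u
      = (P * v) * s + (c * u - P * (H * e)) + H * (G * u - P) := by
  calc (P * s + c + H * G) * u
      = P * (s * u) + (c * u + (H * G) * u) := by noncomm_ring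
    _ = P * (v * s - H * e - H) + (c * u + (H * G) * u) := by rw [hsu]
    _ = (P * v) * s + (c * u - P * (H * e)) + (H * (G * u) - P * H) := by noncomm_ring
    _ = (P * v) * s + (c * u - P * (H * e)) + H * (G * u - P) := by rw [mul_sub, hH P]

lemma abs_step_v (s P c G u v H e : A) (hH : ∀ x : A, H * x = x * H)
    (hsv : s * v = u * s - H * e + H) :
    (P * s + c + H * G) * v
      = (P * u) * s + (c * v - P * (H * e)) + H * (G * v + P) := by
  calc (P * s + c + H * G) * v
      = P * (s * v) + (c * v + (H * G) * v) := by noncomm_ring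
    _ = P * (u * s - H * e + H) + (c * v + (H * G) * v) := by rw [hsv]
    _ = (P * u) * s + (c * v - P * (H * e)) + (H * (G * v) + P * H) := by noncomm_ring
    _ = (P * u) * s + (c * v - P * (H * e)) + H * (G * v + P) := by rw [mul_add, hH P]

lemma abs_step_y (s P c G y H : A) (hsy : s * y = y * s) :
    (P * s + c + H * G) * y = (P * y) * s + c * y + H * (G * y) := by
  calc (P * s + c + H * G) * y
      = P * (s * y) + (c * y + (H * G) * y) := by noncomm_ring
    _ = P * (y * s) + (c * y + (H * G) * y) := by rw [hsy]
    _ = (P * y) * s + c * y + H * (G * y) := by noncomm_ring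

end Abstract2

variable {a : ℕ} {R : Type} [CommRing R] {hb : R}

lemma phi_X (j : Fin a) : vwphi a R hb (X j) = yg a R hb j := by
  simp [vwphi]

lemma phi_C (r : R) : vwphi a R hb (C r) = algebraMap R (VWA a R hb) r := by
  rw [← MvPolynomial.algebraMap_eq, AlgHom.commutes]

lemma phi_comm (p q : MvPolynomial (Fin a) R) :
    vwphi a R hb p * vwphi a R hb q = vwphi a R hb q * vwphi a R hb p := by
  rw [← map_mul, ← map_mul, mul_comm]

lemma phi_F (k : ℕ) (hy : k < a) (hy2 : k + 1 < a) :
    vwphi a R hb ((X ⟨k, hy⟩ - X ⟨k + 1, hy2⟩) ^ 2 - C (hb ^ 2))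
      = Fq a R hb k hy hy2 := by
  rw [map_sub, map_pow, map_sub, phi_X, phi_X, phi_C, map_pow, Fq, Hq]

lemma F_phi_comm (k : ℕ) (hy : k < a) (hy2 : k + 1 < a) (p : MvPolynomial (Fin a) R) :
    Fq a R hb k hy hy2 * vwphi a R hb p = vwphi a R hb p * Fq a R hb k hy hy2 := by
  rw [← phi_F k hy hy2]; exact phi_comm _ _

lemma F_He (k : ℕ) (h1 : k < a - 1) (hy : k < a) (hy2 : k + 1 < a) :
    Fq a R hb k hy hy2 * (Hq a R hb * eg a R hb ⟨k, h1⟩) = 0 := by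
  rw [← mul_assoc, ← Hq_comm, mul_assoc, F_mul_e k h1 hy hy2, mul_zero]

lemma key (k : ℕ) (h1 : k < a - 1) (hy : k < a) (hy2 : k + 1 < a)
    (f : MvPolynomial (Fin a) R) :
    ∃ (c : VWA a R hb) (g : MvPolynomial (Fin a) R),
      Fq a R hb k hy hy2 * c = 0 ∧
      rename (Equiv.swap (⟨k, hy⟩ : Fin a) ⟨k + 1, hy2⟩) f - f
        = (X ⟨k, hy⟩ - X ⟨k + 1, hy2⟩) * g ∧
      sg a R hb ⟨k, h1⟩ * vwphi a R hb f
        = vwphi a R hb (rename (Equiv.swap (⟨k, hy⟩ : Fin a) ⟨k + 1, hy2⟩) f)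
            * sg a R hb ⟨k, h1⟩
          + c + Hq a R hb * vwphi a R hb g := by
  set ku : Fin a := ⟨k, hy⟩ with hku
  set kv : Fin a := ⟨k + 1, hy2⟩ with hkv
  induction f using MvPolynomial.induction_on with
  | C r =>
    refine ⟨0, 0, by rw [mul_zero], by rw [rename_C, sub_self, mul_zero], ?_⟩
    rw [rename_C, map_zero, mul_zero, add_zero, add_zero, phi_C, Algebra.commutes]
  | add p q hp hq =>
    obtain ⟨c1, g1, hc1, hg1, he1⟩ := hp
    obtain ⟨c2, g2, hc2, hg2, he2⟩ := hq
    refine ⟨c1 + c2, g1 + g2, by rw [mul_add, hc1, hc2, add_zero], ?_, ?_⟩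
    · rw [map_add]
      calc rename (Equiv.swap ku kv) p + rename (Equiv.swap ku kv) q - (p + q)
          = (rename (Equiv.swap ku kv) p - p) + (rename (Equiv.swap ku kv) q - q) := by ring
        _ = (X ku - X kv) * (g1 + g2) := by rw [hg1, hg2]; ring
    · simp only [map_add]
      rw [mul_add, he1, he2, add_mul, mul_add]
      abel
  | mul_X p j hp =>
    obtain ⟨c, g, hc, hg, he⟩ := hp
    have hstart : sg a R hb ⟨k, h1⟩ * vwphi a R hb (p * X j)
        = (vwphi a R hb (rename (Equiv.swap ku kv) p) * sg a R hb ⟨k, h1⟩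
            + c + Hq a R hb * vwphi a R hb g) * yg a R hb j := by
      rw [map_mul, phi_X, ← mul_assoc, he]
    have hkune : ku ≠ kv := by
      simp only [hku, hkv, ne_eq, Fin.mk.injEq]; omega
    by_cases hj : j = ku
    · subst hj
      have hswj : Equiv.swap ku kv ku = kv := Equiv.swap_apply_left _ _
      refine ⟨c * yg a R hb ku
          - vwphi a R hb (rename (Equiv.swap ku kv) p) * (Hq a R hb * eg a R hb ⟨k, h1⟩),
        g * X ku - rename (Equiv.swap ku kv) p, ?_, ?_, ?_⟩
      · rw [mul_sub, ← mul_assoc, hc, zero_mul, ← mul_assoc,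
          F_phi_comm k hy hy2, mul_assoc, F_He k h1 hy hy2, mul_zero, sub_self]
      · rw [map_mul, rename_X, hswj]
        linear_combination (X ku : MvPolynomial (Fin a) R) * hg
      · rw [hstart, abs_step_u _ _ _ _ _ (yg a R hb kv) (Hq a R hb) (eg a R hb ⟨k, h1⟩)
          (fun x => Hq_comm x) (rel_su k h1 hy hy2)]
        rw [map_mul, rename_X, hswj, map_mul, phi_X, map_sub, map_mul, phi_X]
    · by_cases hj' : j = kv
      · subst hj'
        have hswj : Equiv.swap ku kv kv = ku := Equiv.swap_apply_right _ _
        refine ⟨c * yg a R hb kv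
            - vwphi a R hb (rename (Equiv.swap ku kv) p) * (Hq a R hb * eg a R hb ⟨k, h1⟩),
          g * X kv + rename (Equiv.swap ku kv) p, ?_, ?_, ?_⟩
        · rw [mul_sub, ← mul_assoc, hc, zero_mul, ← mul_assoc,
            F_phi_comm k hy hy2, mul_assoc, F_He k h1 hy hy2, mul_zero, sub_self]
        · rw [map_mul, rename_X, hswj]
          linear_combination (X kv : MvPolynomial (Fin a) R) * hg
        · rw [hstart, abs_step_v _ _ _ _ (yg a R hb ku) _ (Hq a R hb) (eg a R hb ⟨k, h1⟩)
            (fun x => Hq_comm x) (rel_sv k h1 hy hy2)]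
          rw [map_mul, rename_X, hswj, map_mul, phi_X, map_add, map_mul, phi_X]
      · have hswj : Equiv.swap ku kv j = j := Equiv.swap_apply_of_ne_of_ne hj hj'
        have hj1 : (j : ℕ) ≠ k := fun h => hj (Fin.ext h)
        have hj2 : (j : ℕ) ≠ k + 1 := fun h => hj' (Fin.ext h)
        refine ⟨c * yg a R hb j, g * X j, by rw [← mul_assoc, hc, zero_mul], ?_, ?_⟩
        · rw [map_mul, rename_X, hswj]
          linear_combination (X j : MvPolynomial (Fin a) R) * hg
        · rw [hstart, abs_step_y _ _ _ _ _ _ (rel_sy k h1 j hj1 hj2)]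
          rw [map_mul, rename_X, hswj, map_mul, phi_X, map_mul, phi_X]

end VWProof
namespace VWProof

open MvPolynomial

variable {a : ℕ} {R : Type} [CommRing R] {hb : R}

lemma G_inv (k : ℕ) (hy : k < a) (hy2 : k + 1 < a) :
    rename (Equiv.swap (⟨k, hy⟩ : Fin a) ⟨k + 1, hy2⟩)
      (∏ p ∈ (Finset.univ.filter fun p : Fin a × Fin a => p.1 < p.2).erase
          (⟨k, hy⟩, ⟨k + 1, hy2⟩),
        ((X p.1 - X p.2) ^ 2 - C (hb ^ 2)))
      = ∏ p ∈ (Finset.univ.filter fun p : Fin a × Fin a => p.1 < p.2).erase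
          (⟨k, hy⟩, ⟨k + 1, hy2⟩),
        ((X p.1 - X p.2) ^ 2 - C (hb ^ 2)) := by
  have hkulk : (⟨k, hy⟩ : Fin a) < ⟨k + 1, hy2⟩ := by
    simp [Fin.lt_def]
  set ku : Fin a := ⟨k, hy⟩
  set kv : Fin a := ⟨k + 1, hy2⟩
  set sw : Equiv.Perm (Fin a) := Equiv.swap ku kv with hswdef
  have hswsw : ∀ x, sw (sw x) = x := fun x => Equiv.swap_apply_self _ _ x
  have hswku : sw ku = kv := Equiv.swap_apply_left _ _
  have hswkv : sw kv = ku := Equiv.swap_apply_right _ _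
  rw [map_prod]
  refine Finset.prod_nbij'
    (fun p => if sw p.1 < sw p.2 then (sw p.1, sw p.2) else (sw p.2, sw p.1))
    (fun p => if sw p.1 < sw p.2 then (sw p.1, sw p.2) else (sw p.2, sw p.1))
    ?_ ?_ ?_ ?_ ?_
  · intro p hp
    rw [Finset.mem_erase, Finset.mem_filter] at hp
    obtain ⟨hne, -, hlt⟩ := hp
    rw [Finset.mem_erase, Finset.mem_filter]
    by_cases hcase : sw p.1 < sw p.2
    · rw [if_pos hcase]
      refine ⟨?_, Finset.mem_univ _, hcase⟩
      intro h
      obtain ⟨h1, h2⟩ := Prod.mk.injEq .. ▸ h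
      have hp1 : p.1 = kv := by
        have := congrArg sw h1; rwa [hswsw, hswku] at this
      have hp2 : p.2 = ku := by
        have := congrArg sw h2; rwa [hswsw, hswkv] at this
      rw [hp1, hp2] at hlt
      exact absurd hkulk (lt_asymm hlt)
    · have hne12 : sw p.2 ≠ sw p.1 := fun h => (ne_of_lt hlt) (sw.injective h.symm)
      have hlt' : sw p.2 < sw p.1 := lt_of_le_of_ne (le_of_not_gt hcase) hne12
      rw [if_neg hcase]
      refine ⟨?_, Finset.mem_univ _, hlt'⟩
      intro h
      obtain ⟨h1, h2⟩ := Prod.mk.injEq .. ▸ h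
      have hp2 : p.2 = kv := by
        have := congrArg sw h1; rwa [hswsw, hswku] at this
      have hp1 : p.1 = ku := by
        have := congrArg sw h2; rwa [hswsw, hswkv] at this
      exact hne (by rw [← hp1, ← hp2])
  · intro p hp
    rw [Finset.mem_erase, Finset.mem_filter] at hp
    obtain ⟨hne, -, hlt⟩ := hp
    rw [Finset.mem_erase, Finset.mem_filter]
    by_cases hcase : sw p.1 < sw p.2
    · rw [if_pos hcase]
      refine ⟨?_, Finset.mem_univ _, hcase⟩
      intro h
      obtain ⟨h1, h2⟩ := Prod.mk.injEq .. ▸ h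
      have hp1 : p.1 = kv := by
        have := congrArg sw h1; rwa [hswsw, hswku] at this
      have hp2 : p.2 = ku := by
        have := congrArg sw h2; rwa [hswsw, hswkv] at this
      rw [hp1, hp2] at hlt
      exact absurd hkulk (lt_asymm hlt)
    · have hne12 : sw p.2 ≠ sw p.1 := fun h => (ne_of_lt hlt) (sw.injective h.symm)
      have hlt' : sw p.2 < sw p.1 := lt_of_le_of_ne (le_of_not_gt hcase) hne12
      rw [if_neg hcase]
      refine ⟨?_, Finset.mem_univ _, hlt'⟩
      intro h
      obtain ⟨h1, h2⟩ := Prod.mk.injEq .. ▸ h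
      have hp2 : p.2 = kv := by
        have := congrArg sw h1; rwa [hswsw, hswku] at this
      have hp1 : p.1 = ku := by
        have := congrArg sw h2; rwa [hswsw, hswkv] at this
      exact hne (by rw [← hp1, ← hp2])
  · intro p hp
    rw [Finset.mem_erase, Finset.mem_filter] at hp
    obtain ⟨-, -, hlt⟩ := hp
    by_cases hcase : sw p.1 < sw p.2
    · rw [if_pos hcase]
      simp only [hswsw]
      rw [if_pos hlt]
    · rw [if_neg hcase]
      simp only [hswsw]
      rw [if_neg (asymm hlt)]
  · intro p hp
    rw [Finset.mem_erase, Finset.mem_filter] at hp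
    obtain ⟨-, -, hlt⟩ := hp
    by_cases hcase : sw p.1 < sw p.2
    · rw [if_pos hcase]
      simp only [hswsw]
      rw [if_pos hlt]
    · rw [if_neg hcase]
      simp only [hswsw]
      rw [if_neg (asymm hlt)]
  · intro p hp
    by_cases hcase : sw p.1 < sw p.2
    · rw [if_pos hcase]
      simp only [map_sub, map_pow, rename_X, rename_C]
    · rw [if_neg hcase]
      simp only [map_sub, map_pow, rename_X, rename_C]
      ring

lemma main (a : ℕ) (R : Type) [CommRing R] [IsDomain R] (hb : R) (k : ℕ)
    (hk : k < a - 1) :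
    vwphi a R hb (Dpoly a R hb) * sg a R hb ⟨k, hk⟩ =
      sg a R hb ⟨k, hk⟩ * vwphi a R hb (Dpoly a R hb) := by
  have hy : k < a := by omega
  have hy2 : k + 1 < a := by omega
  have hkulk : (⟨k, hy⟩ : Fin a) < ⟨k + 1, hy2⟩ := by simp [Fin.lt_def]
  have hp0 : ((⟨k, hy⟩ : Fin a), (⟨k + 1, hy2⟩ : Fin a))
      ∈ Finset.univ.filter fun p : Fin a × Fin a => p.1 < p.2 := by
    simp [hkulk]
  have hD : Dpoly a R hb
      = ((X (⟨k, hy⟩ : Fin a) - X ⟨k + 1, hy2⟩) ^ 2 - C (hb ^ 2))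
        * ∏ p ∈ (Finset.univ.filter fun p : Fin a × Fin a => p.1 < p.2).erase
            (⟨k, hy⟩, ⟨k + 1, hy2⟩),
          ((X p.1 - X p.2) ^ 2 - C (hb ^ 2)) := by
    rw [Dpoly, ← Finset.mul_prod_erase _ _ hp0]
  obtain ⟨c, g, hc, hg, he⟩ := key (hb := hb) k hk hy hy2
    (∏ p ∈ (Finset.univ.filter fun p : Fin a × Fin a => p.1 < p.2).erase
        (⟨k, hy⟩, ⟨k + 1, hy2⟩),
      ((X p.1 - X p.2) ^ 2 - C (hb ^ 2)))
  rw [G_inv k hy hy2, sub_self] at hg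
  have hXne : (X (⟨k, hy⟩ : Fin a) - X ⟨k + 1, hy2⟩ : MvPolynomial (Fin a) R) ≠ 0 :=
    sub_ne_zero.mpr (fun h => (ne_of_lt hkulk) (MvPolynomial.X_injective h))
  have hg0 : g = 0 := by
    rcases mul_eq_zero.mp hg.symm with h | h
    · exact absurd h hXne
    · exact h
  rw [G_inv k hy hy2, hg0, map_zero, mul_zero, add_zero] at he
  symm
  rw [hD, map_mul, phi_F k hy hy2, ← mul_assoc, s_F_comm k hk hy hy2, mul_assoc, he,
    mul_add, hc, add_zero, ← mul_assoc]

end VWProof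
/-- in `A_ħ`, `φ(D)` commutes with every `s_k`, where
`D = ∏_{i<j}((y_i − y_j)² − ħ²)`. (Indices are 0-based.) -/
theorem statement11 (a : ℕ) (ha : 2 ≤ a) (k : ℕ) (hk : k < a - 1) :
    vwphi a (Polynomial ℂ) Polynomial.X (Dpoly a (Polynomial ℂ) Polynomial.X) * sg a (Polynomial ℂ) Polynomial.X ⟨k, hk⟩ =
      sg a (Polynomial ℂ) Polynomial.X ⟨k, hk⟩ * vwphi a (Polynomial ℂ) Polynomial.X (Dpoly a (Polynomial ℂ) Polynomial.X) := by
  exact VWProof.main a (Polynomial ℂ) Polynomial.X k hk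
end

section
/- Let B be an associative unital ℂ-algebra with an algebra filtration F. Then the centre of the Rees algebra Rees(B, F) equals the Rees algebra of the centre with the induced filtration; concretely, an element p of Rees(B, F) ⊆ B[X] is central in Rees(B, F) if and only if for every k ∈ ℕ the coefficient of X^k in p lies in F k ∩ Z(B), where Z(B) is the centre of B. -/
/-- Membership in the Rees algebra of a filtered algebra `(B, F)`, realized inside the
polynomial ring `B[X]`: a polynomial `p` belongs to `Rees(B, F)` iff for every `k` the
coefficient of `X^k` in `p` lies in `F k`. -/
def InRees {B : Type} [Ring B] [Algebra ℂ B] (F : ℕ → Submodule ℂ B)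
    (p : Polynomial B) : Prop :=
  ∀ k : ℕ, p.coeff k ∈ F k

/-- for a filtered `ℂ`-algebra `(B, F)`, the centre of the Rees algebra
`Rees(B, F)` is the Rees algebra of the centre with the induced filtration: an element
`p ∈ Rees(B, F) ⊆ B[X]` is central in `Rees(B, F)` iff each coefficient `p.coeff k`
lies in `F k ∩ Z(B)`. -/
theorem statement17 (B : Type) [Ring B] [Algebra ℂ B] (F : ℕ → Submodule ℂ B)
    (hone : (1 : B) ∈ F 0)
    (hmono : ∀ k : ℕ, F k ≤ F (k + 1))
    (hmul : ∀ i j : ℕ, ∀ x ∈ F i, ∀ y ∈ F j, x * y ∈ F (i + j))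
    (hexh : ∀ b : B, ∃ k, b ∈ F k)
    (p : Polynomial B) (hp : InRees F p) :
    (∀ q : Polynomial B, InRees F q → p * q = q * p) ↔
      ∀ k : ℕ, p.coeff k ∈ F k ∧ p.coeff k ∈ Set.center B := by
  constructor
  · intro h k
    refine ⟨hp k, Semigroup.mem_center_iff.mpr fun b => ?_⟩
    obtain ⟨n, hb⟩ := hexh b
    have hq : InRees F (Polynomial.monomial n b) := by
      intro m
      rw [Polynomial.coeff_monomial]
      split
      · subst ‹n = m›; exact hb
      · exact (F m).zero_mem
    have := h _ hq
    have hc := congrArg (fun r => Polynomial.coeff r (k + n)) this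
    simpa [Polynomial.coeff_mul_monomial, Polynomial.coeff_monomial_mul] using hc.symm
  · intro h q _
    ext n
    rw [Polynomial.coeff_mul, Polynomial.coeff_mul]
    conv_rhs => rw [← Finset.HasAntidiagonal.map_swap_antidiagonal, Finset.sum_map]
    refine Finset.sum_congr rfl fun x hx => ?_
    simpa using ((h x.1).2.comm (q.coeff x.2)).eq
end

section
/- Let B be an associative unital ℂ-algebra with an algebra filtration F. Suppose b : ι → B and d : ι → ℕ are such that for every k ∈ ℕ the family (b i)_{i : d i ≤ k} is a ℂ-basis of the subspace F k (a basis of B compatible with the filtration). Then the family (b i · X^{d i})_{i ∈ ι} is a basis of Rees(B, F) as a module over the polynomial ring ℂ[X]. -/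
/-- The polynomial ring `B[X]` is an algebra (hence a module) over `ℂ[X]`, via
coefficientwise application of `algebraMap ℂ B`. -/
noncomputable instance polyPolyAlgebra (B : Type) [Ring B] [Algebra ℂ B] :
    Algebra (Polynomial ℂ) (Polynomial B) :=
  RingHom.toAlgebra' (Polynomial.mapRingHom (algebraMap ℂ B)) (by
    intro c x
    induction c using Polynomial.induction_on' with
    | add p q hp hq => simp only [map_add, add_mul, mul_add, hp, hq]
    | monomial k r =>
        have hc : ∀ y : Polynomial B,
            Polynomial.C (algebraMap ℂ B r) * y = y * Polynomial.C (algebraMap ℂ B r) := by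
          intro y
          ext m
          simp only [Polynomial.coeff_C_mul, Polynomial.coeff_mul_C]
          exact Algebra.commutes r (y.coeff m)
        rw [Polynomial.coe_mapRingHom, Polynomial.map_monomial,
          ← Polynomial.C_mul_X_pow_eq_monomial, mul_assoc, Polynomial.X_pow_mul,
          ← mul_assoc, hc x, mul_assoc])

lemma smul_eq_map_mul (B : Type) [Ring B] [Algebra ℂ B] (c : Polynomial ℂ) (y : Polynomial B) :
    c • y = (c.map (algebraMap ℂ B)) * y := rfl

lemma coeff_smul_term (B : Type) [Ring B] [Algebra ℂ B] (c : Polynomial ℂ) (a : B) (n k : ℕ) :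
    (c • (Polynomial.C a * Polynomial.X ^ n)).coeff k
      = if n ≤ k then c.coeff (k - n) • a else 0 := by
  rw [smul_eq_map_mul, ← mul_assoc, Polynomial.coeff_mul_X_pow']
  split
  · rw [Polynomial.coeff_mul_C, Polynomial.coeff_map, Algebra.smul_def]
  · rfl

/-- if `(B, F)` is a filtered `ℂ`-algebra and `(b i)_{i : ι}` (with degrees
`d i`) is a basis of `B` compatible with the filtration (i.e. for every `k` the family
`(b i)_{d i ≤ k}` is a `ℂ`-basis of `F k`), then the family `(b i · X^{d i})_{i : ι}` is a
basis of the Rees algebra `Rees(B, F) = {p ∈ B[X] | ∀ k, p.coeff k ∈ F k}` as a module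
over `ℂ[X]`. -/
theorem statement18 (B : Type) [Ring B] [Algebra ℂ B] (F : ℕ → Submodule ℂ B)
    (hone : (1 : B) ∈ F 0)
    (hmono : ∀ k : ℕ, F k ≤ F (k + 1))
    (hmul : ∀ i j : ℕ, ∀ x ∈ F i, ∀ y ∈ F j, x * y ∈ F (i + j))
    (hexh : ∀ x : B, ∃ k, x ∈ F k)
    (ι : Type) (b : ι → B) (d : ι → ℕ)
    (hindep : ∀ k : ℕ, LinearIndependent ℂ (fun i : {i : ι // d i ≤ k} => b i.1))
    (hspan : ∀ k : ℕ, Submodule.span ℂ (b '' {i : ι | d i ≤ k}) = F k) :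
    LinearIndependent (Polynomial ℂ)
        (fun i : ι => Polynomial.C (b i) * Polynomial.X ^ d i) ∧
      (Submodule.span (Polynomial ℂ)
          (Set.range (fun i : ι => Polynomial.C (b i) * Polynomial.X ^ d i)) :
          Set (Polynomial B)) =
        {p : Polynomial B | ∀ k : ℕ, p.coeff k ∈ F k} := by
  classical
  set v : ι → Polynomial B := fun i => Polynomial.C (b i) * Polynomial.X ^ d i with hv
  have hFmono : ∀ {j k : ℕ}, j ≤ k → F j ≤ F k := by
    intro j k h
    induction h with
    | refl => exact le_rfl
    | step _ ih => exact ih.trans (hmono _)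
  have hN : ∀ i, b i ∈ F (d i) := fun i => by
    rw [← hspan (d i)]
    exact Submodule.subset_span ⟨i, show d i ≤ d i from le_rfl, rfl⟩
  constructor
  · rw [linearIndependent_iff']
    intro s g hsum i₀ hi₀
    ext m
    rw [Polynomial.coeff_zero]
    set k := m + d i₀ with hk
    have hcoeff : ∑ i ∈ s, (if d i ≤ k then ((g i).coeff (k - d i)) • b i else 0) = 0 := by
      have h0 := congrArg (fun p : Polynomial B => p.coeff k) hsum
      simp only [hv, Polynomial.finset_sum_coeff, coeff_smul_term, Polynomial.coeff_zero] at h0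
      exact h0
    have hfilter : ∑ i ∈ s.filter (fun i => d i ≤ k), ((g i).coeff (k - d i)) • b i = 0 := by
      rw [Finset.sum_filter]; exact hcoeff
    have hsub := (Finset.sum_subtype_eq_sum_filter (s := s)
      (fun i => ((g i).coeff (k - d i)) • b i) (p := fun i => d i ≤ k)).trans hfilter
    have hres := linearIndependent_iff'.mp (hindep k) (s.subtype (fun i => d i ≤ k))
      (fun j => (g j.1).coeff (k - d j.1)) hsub ⟨i₀, Nat.le_add_left _ _⟩
      (by simp [Finset.mem_subtype, hi₀])
    simpa [hk, Nat.add_sub_cancel] using hres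
  · apply Set.Subset.antisymm
    · intro p hp
      have hp' : p ∈ Submodule.span (Polynomial ℂ) (Set.range v) := hp
      clear hp
      show ∀ k, p.coeff k ∈ F k
      induction hp' using Submodule.span_induction with
      | mem x hx =>
        obtain ⟨i, rfl⟩ := hx
        intro k
        show (Polynomial.C (b i) * Polynomial.X ^ d i).coeff k ∈ F k
        rw [Polynomial.C_mul_X_pow_eq_monomial, Polynomial.coeff_monomial]
        split
        · next h => exact hFmono (le_of_eq h) (hN i)
        · exact (F k).zero_mem
      | zero => intro k; simp
      | add y z hy hz ihy ihz =>
        intro k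
        simpa using (F k).add_mem (ihy k) (ihz k)
      | smul c q hq ih =>
        intro k
        rw [smul_eq_map_mul, Polynomial.coeff_mul]
        refine Submodule.sum_mem _ ?_
        rintro ⟨a1, a2⟩ hmem
        rw [Finset.HasAntidiagonal.mem_antidiagonal] at hmem
        have h2 : a2 ≤ k := hmem ▸ Nat.le_add_left a2 a1
        have heq : (c.map (algebraMap ℂ B)).coeff a1 * q.coeff a2
            = c.coeff a1 • q.coeff a2 := by
          rw [Polynomial.coeff_map, Algebra.smul_def]
        show (c.map (algebraMap ℂ B)).coeff a1 * q.coeff a2 ∈ F k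
        rw [heq]
        exact hFmono h2 ((F a2).smul_mem _ (ih a2))
    · intro p hp
      have key : ∀ k : ℕ, ∀ x ∈ F k, Polynomial.C x * Polynomial.X ^ k ∈
          Submodule.span (Polynomial ℂ) (Set.range v) := by
        intro k x hx
        rw [← hspan k] at hx
        induction hx using Submodule.span_induction with
        | mem y hy =>
          obtain ⟨i, hi, rfl⟩ := hy
          have heq : (Polynomial.X ^ (k - d i) : Polynomial ℂ) • v i
              = Polynomial.C (b i) * Polynomial.X ^ k := by
            rw [smul_eq_map_mul, Polynomial.map_pow, Polynomial.map_X]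
            show Polynomial.X ^ (k - d i) * (Polynomial.C (b i) * Polynomial.X ^ d i) = _
            rw [← mul_assoc, Polynomial.X_pow_mul (n := k - d i) (p := Polynomial.C (b i)), mul_assoc, ← pow_add,
              Nat.sub_add_cancel hi]
          rw [← heq]
          exact Submodule.smul_mem _ _ (Submodule.subset_span ⟨i, rfl⟩)
        | zero => simp
        | add y z hy hz ihy ihz =>
          rw [map_add, add_mul]
          exact Submodule.add_mem _ ihy ihz
        | smul α y hy ih =>
          have heq : Polynomial.C (α • y) * Polynomial.X ^ k
              = (Polynomial.C α : Polynomial ℂ) • (Polynomial.C y * Polynomial.X ^ k) := by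
            rw [smul_eq_map_mul, Polynomial.map_C, ← mul_assoc, ← Polynomial.C_mul,
              ← Algebra.smul_def]
          rw [heq]
          exact Submodule.smul_mem _ _ ih
      show p ∈ Submodule.span (Polynomial ℂ) (Set.range v)
      rw [← Polynomial.sum_C_mul_X_pow_eq p, Polynomial.sum_def]
      exact Submodule.sum_mem _ fun k _ => key k _ (hp k)
end
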